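/- The number of perfect matchings in an r-regular bipartite graph with n vertices in each part is at most (r!)^{n/r}. -/

import Mathlib

open Real Finset
open scoped Classical

/-- convexity lemma -/
theorem conv_lemma {ι : Type*} (s : Finset ι) (hs : s.Nonempty) (t : ι → ℕ) :
    ((∑ k ∈ s, t k : ℕ) : ℝ) ^ (∑ k ∈ s, t k) ≤
      (s.card : ℝ) ^ (∑ k ∈ s, t k) * ∏ k ∈ s, (t k : ℝ) ^ (t k) := by
  set T : ℕ := ∑ k ∈ s, t k with hT
  rcases Nat.eq_zero_or_pos T with h0 | hpos
  · have hz : ∀ k ∈ s, t k = 0 := Finset.sum_eq_zero_iff.mp h0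
    have : ∏ k ∈ s, (t k : ℝ) ^ (t k) = 1 := by
      apply Finset.prod_eq_one
      intro k hk; rw [hz k hk]; norm_num
    simp [h0, this]
  · have hc : (0:ℝ) < s.card := by exact_mod_cast hs.card_pos
    have hTpos : (0:ℝ) < T := by exact_mod_cast hpos
    have hfactpos : ∀ k ∈ s, (0:ℝ) < (t k : ℝ) ^ (t k) := by
      intro k hk
      rcases Nat.eq_zero_or_pos (t k) with h | h
      · simp [h]
      · have : (0:ℝ) < (t k : ℝ) := by exact_mod_cast h
        positivity
    have hprodpos : (0:ℝ) < ∏ k ∈ s, (t k : ℝ) ^ (t k) := Finset.prod_pos hfactpos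
    have hR : (0:ℝ) < (s.card : ℝ) ^ T * ∏ k ∈ s, (t k : ℝ) ^ (t k) := by positivity
    have hL : (0:ℝ) < (T:ℝ) ^ T := by positivity
    have jensen := convexOn_mul_log.map_sum_le (t := s) (w := fun _ => (s.card : ℝ)⁻¹)
      (p := fun k => (t k : ℝ)) (fun i _ => by positivity)
      (by rw [Finset.sum_const, nsmul_eq_mul, mul_inv_cancel₀ (ne_of_gt hc)])
      (fun i _ => by simp)
    simp only [smul_eq_mul, ← Finset.mul_sum] at jensen
    have hsum : ∑ i ∈ s, (t i : ℝ) = (T : ℝ) := by rw [hT]; push_cast; ring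
    rw [hsum] at jensen
    -- jensen : (c⁻¹ * T) * log (c⁻¹ * T) ≤ c⁻¹ * Σ t log t
    have key : (T:ℝ) * Real.log T ≤ (T:ℝ) * Real.log s.card + ∑ i ∈ s, (t i : ℝ) * Real.log (t i) := by
      have h1 : (T:ℝ) * Real.log ((s.card:ℝ)⁻¹ * T) ≤ ∑ i ∈ s, (t i : ℝ) * Real.log (t i) := by
        have := mul_le_mul_of_nonneg_left jensen (le_of_lt hc)
        calc (T:ℝ) * Real.log ((s.card:ℝ)⁻¹ * T)
            = (s.card:ℝ) * ((s.card:ℝ)⁻¹ * (T:ℝ) * Real.log ((s.card:ℝ)⁻¹ * (T:ℝ))) := by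
              field_simp
          _ ≤ (s.card:ℝ) * ((s.card:ℝ)⁻¹ * ∑ i ∈ s, (t i : ℝ) * Real.log (t i)) := this
          _ = ∑ i ∈ s, (t i : ℝ) * Real.log (t i) := by field_simp
      have h2 : Real.log ((s.card:ℝ)⁻¹ * T) = Real.log T - Real.log s.card := by
        rw [Real.log_mul (by positivity) (ne_of_gt hTpos), Real.log_inv]; ring
      rw [h2] at h1; nlinarith [h1]
    rw [← Real.log_le_log_iff hL hR, Real.log_mul (ne_of_gt (by positivity)) (ne_of_gt hprodpos),
      Real.log_pow, Real.log_pow,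
      Real.log_prod (fun k hk => ne_of_gt (hfactpos k hk))]
    calc (T:ℝ) * Real.log T ≤ (T:ℝ) * Real.log s.card + ∑ i ∈ s, (t i : ℝ) * Real.log (t i) := key
      _ = (T:ℝ) * Real.log s.card + ∑ k ∈ s, Real.log ((t k : ℝ) ^ (t k)) := by
          congr 1; apply Finset.sum_congr rfl; intro k hk; rw [Real.log_pow]

theorem factorial_combine (n r : ℕ) (h1 : 1 ≤ r) (h2 : r ≤ n + 1) :
    (r : ℝ) * ((((r-1).factorial : ℕ) : ℝ) ^ ((1:ℝ)/(((r-1:ℕ)) : ℝ))) ^ (r-1)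
        * (((r.factorial : ℕ) : ℝ) ^ ((1:ℝ)/(r : ℝ))) ^ (n+1-r)
      = ((r.factorial : ℕ) : ℝ) ^ (((n:ℝ)+1)/(r:ℝ)) := by
  have hrpos : (0:ℝ) < r := by exact_mod_cast h1
  have hfpos : (0:ℝ) < (r.factorial : ℝ) := by exact_mod_cast r.factorial_pos
  have hc1 : ((((r-1).factorial : ℕ) : ℝ) ^ ((1:ℝ)/(((r-1:ℕ)) : ℝ))) ^ (r-1)
      = (((r-1).factorial : ℕ) : ℝ) := by
    rcases Nat.eq_zero_or_pos (r-1) with h | h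
    · rw [h]; simp
    · have hne : (((r-1:ℕ)):ℝ) ≠ 0 := by positivity
      rw [← Real.rpow_natCast (((((r-1).factorial : ℕ) : ℝ)) ^ ((1:ℝ)/(((r-1:ℕ)) : ℝ))) (r-1),
        ← Real.rpow_mul (by positivity), one_div, inv_mul_cancel₀ hne, Real.rpow_one]
  have hc2 : (((r.factorial : ℕ) : ℝ) ^ ((1:ℝ)/(r : ℝ))) ^ (n+1-r)
      = ((r.factorial : ℕ) : ℝ) ^ ((((n+1-r:ℕ)):ℝ)/(r:ℝ)) := by
    rw [← Real.rpow_natCast ((((r.factorial : ℕ) : ℝ)) ^ ((1:ℝ)/(r : ℝ))) (n+1-r),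
      ← Real.rpow_mul (by positivity)]
    congr 1; field_simp
  rw [hc1, hc2]
  have hmul : (r : ℝ) * (((r-1).factorial : ℕ) : ℝ) = (r.factorial : ℝ) := by
    exact_mod_cast congrArg (Nat.cast (R := ℝ)) (Nat.mul_factorial_pred (Nat.one_le_iff_ne_zero.mp h1))
  rw [hmul]
  nth_rewrite 1 [← Real.rpow_one ((r.factorial : ℕ) : ℝ)]
  rw [← Real.rpow_add hfpos]
  congr 1
  rw [Nat.cast_sub h2]
  push_cast
  field_simp
  ring

variable {α β : Type*} [Fintype α] [Fintype β] [DecidableEq α] [DecidableEq β]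

noncomputable def mset (d : β) (R : Finset α) (N : α → Finset β) : Finset (α → β) :=
  Finset.univ.filter (fun f => (∀ i ∈ R, f i ∈ N i) ∧ (∀ i ∉ R, f i = d) ∧ Set.InjOn f R)

theorem mem_mset {d : β} {R : Finset α} {N : α → Finset β} {f : α → β} :
    f ∈ mset d R N ↔ (∀ i ∈ R, f i ∈ N i) ∧ (∀ i ∉ R, f i = d) ∧ Set.InjOn f R := by
  simp [mset]

theorem mset_empty_card (d : β) (N : α → Finset β) : (mset d (∅ : Finset α) N).card ≤ 1 := by
  apply Finset.card_le_one.mpr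
  intro f hf g hg
  rw [mem_mset] at hf hg
  funext x
  rw [hf.2.1 x (by simp), hg.2.1 x (by simp)]

theorem fiber_card (d : β) (R : Finset α) (N : α → Finset β) {i0 : α} (hi0 : i0 ∈ R)
    {k : β} (hk : k ∈ N i0) :
    ((mset d R N).filter (fun f => f i0 = k)).card
      = (mset d (R.erase i0) (fun j => (N j).erase k)).card := by
  apply Finset.card_bij (fun f _ => Function.update f i0 d)
  · rintro f hf
    rw [Finset.mem_filter] at hf
    obtain ⟨hf, hfk⟩ := hf
    rw [mem_mset] at hf ⊢
    obtain ⟨h1, h2, h3⟩ := hf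
    refine ⟨?_, ?_, ?_⟩
    · intro j hj
      have hji : j ≠ i0 := Finset.ne_of_mem_erase hj
      rw [Function.update_of_ne hji]
      refine Finset.mem_erase.mpr ⟨?_, h1 j (Finset.mem_of_mem_erase hj)⟩
      intro hcon
      exact hji (h3 (by exact_mod_cast Finset.mem_of_mem_erase hj) (by exact_mod_cast hi0) (by rw [hcon, hfk]))
    · intro j hj
      rcases eq_or_ne j i0 with rfl | hji
      · rw [Function.update_self]
      · rw [Function.update_of_ne hji]
        exact h2 j (fun hc => hj (Finset.mem_erase.mpr ⟨hji, hc⟩))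
    · intro x hx y hy hxy
      have hxi : x ≠ i0 := Finset.ne_of_mem_erase hx
      have hyi : y ≠ i0 := Finset.ne_of_mem_erase hy
      rw [Function.update_of_ne hxi, Function.update_of_ne hyi] at hxy
      exact h3 (by exact_mod_cast Finset.mem_of_mem_erase hx) (by exact_mod_cast Finset.mem_of_mem_erase hy) hxy
  · intro f hf g hg hfg
    rw [Finset.mem_filter] at hf hg
    funext x
    rcases eq_or_ne x i0 with rfl | hx
    · rw [hf.2, hg.2]
    · have := congrFun hfg x
      rwa [Function.update_of_ne hx, Function.update_of_ne hx] at this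
  · intro g hg
    rw [mem_mset] at hg
    obtain ⟨h1, h2, h3⟩ := hg
    refine ⟨Function.update g i0 k, ?_, ?_⟩
    · rw [Finset.mem_filter]
      constructor
      · rw [mem_mset]
        refine ⟨?_, ?_, ?_⟩
        · intro j hj
          rcases eq_or_ne j i0 with rfl | hji
          · rwa [Function.update_self]
          · rw [Function.update_of_ne hji]
            exact Finset.mem_of_mem_erase (h1 j (Finset.mem_erase.mpr ⟨hji, hj⟩))
        · intro j hj
          have hji : j ≠ i0 := fun hc => hj (hc ▸ hi0)
          rw [Function.update_of_ne hji]
          exact h2 j (fun hc => hj (Finset.mem_of_mem_erase hc))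
        · intro x hx y hy hxy
          by_cases hxi : x = i0
          · by_cases hyi : y = i0
            · rw [hxi, hyi]
            · exfalso
              rw [hxi, Function.update_self, Function.update_of_ne hyi] at hxy
              have hyR : y ∈ R.erase i0 := Finset.mem_erase.mpr ⟨hyi, by exact_mod_cast hy⟩
              exact (Finset.ne_of_mem_erase (h1 y hyR)) hxy.symm
          · by_cases hyi : y = i0
            · exfalso
              rw [hyi, Function.update_self, Function.update_of_ne hxi] at hxy
              have hxR : x ∈ R.erase i0 := Finset.mem_erase.mpr ⟨hxi, by exact_mod_cast hx⟩
              exact (Finset.ne_of_mem_erase (h1 x hxR)) hxy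
            · rw [Function.update_of_ne hxi, Function.update_of_ne hyi] at hxy
              exact h3 (by exact Finset.mem_coe.mpr (Finset.mem_erase.mpr ⟨hxi, by exact_mod_cast hx⟩))
                (by exact Finset.mem_coe.mpr (Finset.mem_erase.mpr ⟨hyi, by exact_mod_cast hy⟩)) hxy
      · exact Function.update_self _ _ _
    · funext x
      by_cases hx : x = i0
      · rw [hx, Function.update_self, h2 i0 (Finset.notMem_erase i0 R)]
      · rw [Function.update_of_ne hx, Function.update_of_ne hx]

theorem fiber_sum (d : β) (R : Finset α) (N : α → Finset β) {i0 : α} (hi0 : i0 ∈ R) :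
    (mset d R N).card = ∑ k ∈ N i0, ((mset d R N).filter (fun f => f i0 = k)).card := by
  apply Finset.card_eq_sum_card_fiberwise
  intro f hf
  exact (mem_mset.mp hf).1 i0 hi0

theorem bregman {α β : Type*} [Fintype α] [Fintype β] [DecidableEq α] [DecidableEq β]
    (d : β) (n : ℕ) :
    ∀ (R : Finset α) (C : Finset β) (N : α → Finset β),
      R.card = n → C.card = n → (∀ i ∈ R, N i ⊆ C) →
      ((mset d R N).card : ℝ) ≤ ∏ i ∈ R, (((N i).card.factorial : ℕ) : ℝ) ^ ((1:ℝ) / ((N i).card : ℝ)) := by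
  induction n with
  | zero =>
    intro R C N hR hC hN
    rw [Finset.card_eq_zero.mp hR]
    simpa using (by exact_mod_cast mset_empty_card d N : ((mset d (∅:Finset α) N).card : ℝ) ≤ 1)
  | succ n IH =>
    intro R C N hR hC hN
    set M := mset d R N with hM
    by_cases hMz : M.card = 0
    · rw [hMz]
      push_cast
      apply Finset.prod_nonneg
      intro j hj
      positivity
    · have hP1 : 1 ≤ M.card := Nat.one_le_iff_ne_zero.mpr hMz
      obtain ⟨f0, hf0⟩ : M.Nonempty := Finset.card_pos.mp hP1
      have hNne : ∀ i ∈ R, 1 ≤ (N i).card := fun i hi =>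
        Finset.card_pos.mpr ⟨f0 i, (mem_mset.mp hf0).1 i hi⟩
      have hNle : ∀ i ∈ R, (N i).card ≤ n + 1 := fun i hi => hC ▸ Finset.card_le_card (hN i hi)
      set P := M.card with hPdef
      set q : α → β → ℕ := fun i k => (M.filter (fun f => f i = k)).card with hq
      -- image lemma
      have himg : ∀ f ∈ M, R.image f = C := by
        intro f hf
        obtain ⟨h1, h2, h3⟩ := mem_mset.mp hf
        apply Finset.eq_of_subset_of_card_le
        · intro k hk
          obtain ⟨i, hi, rfl⟩ := Finset.mem_image.mp hk
          exact hN i hi (h1 i hi)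
        · rw [Finset.card_image_of_injOn h3, hR, hC]
      -- per-f bound
      have stepf : ∀ f ∈ M, ∏ i ∈ R, ((N i).card : ℝ) * (q i (f i) : ℝ)
          ≤ ∏ j ∈ R, (((N j).card.factorial : ℕ) : ℝ) ^ (((n:ℝ)+1) / ((N j).card : ℝ)) := by
        intro f hf
        obtain ⟨hm1, hm2, hm3⟩ := mem_mset.mp hf
        set G : α → β → ℝ := fun j k =>
          ((((N j).erase k).card.factorial : ℕ) : ℝ) ^ ((1:ℝ)/((((N j).erase k).card : ℕ):ℝ)) with hG
        have hqle : ∀ i ∈ R, (q i (f i) : ℝ) ≤ ∏ j ∈ R.erase i, G j (f i) := by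
          intro i hi
          have := fiber_card d R N hi (hm1 i hi)
          rw [hq]
          simp only
          rw [this]
          exact IH (R.erase i) (C.erase (f i)) (fun j => (N j).erase (f i))
            (by rw [Finset.card_erase_of_mem hi, hR]; rfl)
            (by rw [Finset.card_erase_of_mem (hN i hi (hm1 i hi)), hC]; rfl)
            (fun j hj => Finset.erase_subset_erase _ (hN j (Finset.mem_of_mem_erase hj)))
        have perj : ∀ j ∈ R, ((N j).card : ℝ) * ∏ i ∈ R.erase j, G j (f i)
            = (((N j).card.factorial : ℕ) : ℝ) ^ (((n:ℝ)+1) / ((N j).card : ℝ)) := by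
          intro j hj
          have hfjC : f j ∈ C := hN j hj (hm1 j hj)
          have hinj' : Set.InjOn f (R.erase j : Finset α) :=
            hm3.mono (by intro x hx; exact Finset.mem_of_mem_erase hx)
          have himg2 : (R.erase j).image f = C.erase (f j) := by
            apply Finset.eq_of_subset_of_card_le
            · intro k hk
              obtain ⟨i, hi, rfl⟩ := Finset.mem_image.mp hk
              refine Finset.mem_erase.mpr ⟨?_, ?_⟩
              · intro hc
                exact (Finset.ne_of_mem_erase hi)
                  (hm3 (Finset.mem_coe.mpr (Finset.mem_of_mem_erase hi)) (Finset.mem_coe.mpr hj) hc)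
              · rw [← himg f hf]
                exact Finset.mem_image_of_mem f (Finset.mem_of_mem_erase hi)
            · rw [Finset.card_erase_of_mem hfjC, hC,
                Finset.card_image_of_injOn hinj', Finset.card_erase_of_mem hj, hR]
          have himval : ∏ i ∈ R.erase j, G j (f i) = ∏ k ∈ C.erase (f j), G j k := by
            rw [← himg2]
            rw [Finset.prod_image (fun x hx y hy hxy =>
              hinj' (Finset.mem_coe.mpr hx) (Finset.mem_coe.mpr hy) hxy)]
          have hsplit : C.erase (f j) = ((N j).erase (f j)) ∪ (C \ N j) := by
            ext k
            simp only [Finset.mem_erase, Finset.mem_union, Finset.mem_sdiff]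
            constructor
            · rintro ⟨hk1, hk2⟩
              by_cases h : k ∈ N j
              · exact Or.inl ⟨hk1, h⟩
              · exact Or.inr ⟨hk2, h⟩
            · rintro (⟨hk1, hk2⟩ | ⟨hk1, hk2⟩)
              · exact ⟨hk1, hN j hj hk2⟩
              · exact ⟨fun hc => hk2 (hc ▸ hm1 j hj), hk1⟩
          have hdisj : Disjoint ((N j).erase (f j)) (C \ N j) := by
            apply Finset.disjoint_left.mpr
            intro k hk1 hk2
            exact (Finset.mem_sdiff.mp hk2).2 (Finset.mem_of_mem_erase hk1)
          have hA : ∏ k ∈ (N j).erase (f j), G j k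
              = (((((N j).card - 1).factorial : ℕ) : ℝ) ^ ((1:ℝ)/((((N j).card - 1 : ℕ)) : ℝ))) ^ ((N j).card - 1) := by
            rw [Finset.prod_congr rfl (fun k hk => ?_), Finset.prod_const,
              Finset.card_erase_of_mem (hm1 j hj)]
            rw [hG]
            simp only
            rw [Finset.card_erase_of_mem (Finset.mem_of_mem_erase hk)]
          have hB : ∏ k ∈ C \ N j, G j k
              = ((((N j).card.factorial : ℕ) : ℝ) ^ ((1:ℝ)/(((N j).card : ℕ) : ℝ))) ^ (n + 1 - (N j).card) := by
            rw [Finset.prod_congr rfl (fun k hk => ?_), Finset.prod_const,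
              Finset.card_sdiff_of_subset (hN j hj), hC]
            rw [hG]
            simp only
            rw [Finset.erase_eq_of_notMem (Finset.mem_sdiff.mp hk).2]
          rw [himval, hsplit, Finset.prod_union hdisj, hA, hB, ← mul_assoc]
          exact factorial_combine n (N j).card (hNne j hj) (hNle j hj)
        calc ∏ i ∈ R, (((N i).card : ℝ) * (q i (f i) : ℝ))
            ≤ ∏ i ∈ R, (((N i).card : ℝ) * ∏ j ∈ R.erase i, G j (f i)) := by
              apply Finset.prod_le_prod
              · intro i _; positivity
              · intro i hi
                exact mul_le_mul_of_nonneg_left (hqle i hi) (by positivity)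
          _ = (∏ i ∈ R, ((N i).card : ℝ)) * ∏ i ∈ R, ∏ j ∈ R.erase i, G j (f i) :=
              Finset.prod_mul_distrib
          _ = (∏ j ∈ R, ((N j).card : ℝ)) * ∏ j ∈ R, ∏ i ∈ R.erase j, G j (f i) := by
              congr 1
              exact Finset.prod_comm' (fun x y => by
                simp only [Finset.mem_erase]
                constructor
                · rintro ⟨h1, h2, h3⟩; exact ⟨⟨fun hc => h2 hc.symm, h1⟩, h3⟩
                · rintro ⟨⟨h1, h2⟩, h3⟩; exact ⟨h2, fun hc => h1 hc.symm, h3⟩)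
          _ = ∏ j ∈ R, (((N j).card : ℝ) * ∏ i ∈ R.erase j, G j (f i)) :=
              Finset.prod_mul_distrib.symm
          _ = ∏ j ∈ R, (((N j).card.factorial : ℕ) : ℝ) ^ (((n:ℝ)+1) / ((N j).card : ℝ)) :=
              Finset.prod_congr rfl perj
      -- convexity per i
      have stepc : ∀ i ∈ R, ((P:ℝ)) ^ P ≤ ((N i).card : ℝ) ^ P * ∏ k ∈ N i, (q i k : ℝ) ^ (q i k) := by
        intro i hi
        have hsum : ∑ k ∈ N i, q i k = P := (fiber_sum d R N hi).symm
        have := conv_lemma (N i) (Finset.card_pos.mp (hNne i hi)) (q i)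
        rwa [hsum] at this
      -- grouping per i
      have stepg : ∀ i ∈ R, ∏ k ∈ N i, (q i k : ℝ) ^ (q i k) = ∏ f ∈ M, (q i (f i) : ℝ) := by
        intro i hi
        rw [← Finset.prod_fiberwise_of_maps_to' (t := N i) (fun f hf => (mem_mset.mp hf).1 i hi)
          (fun k => (q i k : ℝ))]
        apply Finset.prod_congr rfl
        intro k hk
        rw [Finset.prod_const]
      -- the chain
      have chain : ((P:ℝ)) ^ ((n+1) * P)
          ≤ (∏ j ∈ R, (((N j).card.factorial : ℕ) : ℝ) ^ (((n:ℝ)+1) / ((N j).card : ℝ))) ^ P := by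
        calc ((P:ℝ)) ^ ((n+1) * P) = ∏ i ∈ R, ((P:ℝ)) ^ P := by
              rw [Finset.prod_const, hR, ← pow_mul, mul_comm]
          _ ≤ ∏ i ∈ R, (((N i).card : ℝ) ^ P * ∏ k ∈ N i, (q i k : ℝ) ^ (q i k)) := by
              apply Finset.prod_le_prod (fun i _ => by positivity) stepc
          _ = ∏ i ∈ R, ∏ f ∈ M, (((N i).card : ℝ) * (q i (f i) : ℝ)) := by
              apply Finset.prod_congr rfl
              intro i hi
              rw [Finset.prod_mul_distrib, Finset.prod_const, stepg i hi]
          _ = ∏ f ∈ M, ∏ i ∈ R, (((N i).card : ℝ) * (q i (f i) : ℝ)) := Finset.prod_comm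
          _ ≤ ∏ f ∈ M, ∏ j ∈ R, (((N j).card.factorial : ℕ) : ℝ) ^ (((n:ℝ)+1) / ((N j).card : ℝ)) := by
              apply Finset.prod_le_prod
              · intro f _
                apply Finset.prod_nonneg
                intro i _
                positivity
              · exact stepf
          _ = _ := by rw [Finset.prod_const]
      -- extract
      have hB0 : (0:ℝ) ≤ ∏ i ∈ R, (((N i).card.factorial : ℕ) : ℝ) ^ ((1:ℝ) / ((N i).card : ℝ)) := by
        apply Finset.prod_nonneg; intro j hj; positivity
      have hKB : (∏ j ∈ R, (((N j).card.factorial : ℕ) : ℝ) ^ (((n:ℝ)+1) / ((N j).card : ℝ)))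
          = (∏ i ∈ R, (((N i).card.factorial : ℕ) : ℝ) ^ ((1:ℝ) / ((N i).card : ℝ))) ^ (n+1) := by
        rw [← Finset.prod_pow]
        apply Finset.prod_congr rfl
        intro j hj
        rw [← Real.rpow_natCast ((((N j).card.factorial : ℕ) : ℝ) ^ ((1:ℝ) / ((N j).card : ℝ))) (n+1),
          ← Real.rpow_mul (by positivity)]
        congr 1
        push_cast
        ring
      rw [hKB, pow_mul] at chain
      have h1 : ((P:ℝ)) ^ (n+1) ≤ (∏ i ∈ R, (((N i).card.factorial : ℕ) : ℝ) ^ ((1:ℝ) / ((N i).card : ℝ))) ^ (n+1) := by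
        apply le_of_pow_le_pow_left₀ hMz (by positivity)
        exact chain
      exact le_of_pow_le_pow_left₀ (Nat.succ_ne_zero n) hB0 h1

theorem perfect_matchings_upper_bound (n r : ℕ)
    (E : Finset (Fin n × Fin n))
    (hleft : ∀ a : Fin n, (E.filter fun e => e.1 = a).card = r)
    (hright : ∀ b : Fin n, (E.filter fun e => e.2 = b).card = r) :
    ((Finset.univ.filter fun f : Equiv.Perm (Fin n) => ∀ a, (a, f a) ∈ E).card : ℝ) ≤
      (Nat.factorial r : ℝ) ^ ((n : ℝ) / r) := by
  rcases Nat.eq_zero_or_pos n with rfl | hn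
  · have h1 : (Finset.univ.filter fun f : Equiv.Perm (Fin 0) => ∀ a, (a, f a) ∈ E) = Finset.univ := by
      apply Finset.filter_true_of_mem
      intro f _ a
      exact absurd a.2 (by omega)
    rw [h1, show ((0:ℕ):ℝ)/(r:ℝ) = 0 by simp, Real.rpow_zero]
    simp [Finset.card_univ]
  · set d : Fin n := ⟨0, hn⟩
    set N : Fin n → Finset (Fin n) := fun a => (E.filter fun e => e.1 = a).image Prod.snd with hN
    have hNcard : ∀ a, (N a).card = r := by
      intro a
      rw [hN]
      simp only
      rw [Finset.card_image_of_injOn, hleft a]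
      intro e he e' he' hee
      rw [Finset.mem_coe, Finset.mem_filter] at he he'
      exact Prod.ext (he.2.trans he'.2.symm) hee
    have hmemN : ∀ (a b : Fin n), b ∈ N a ↔ (a, b) ∈ E := by
      intro a b
      rw [hN]
      simp only [Finset.mem_image, Finset.mem_filter]
      constructor
      · rintro ⟨e, ⟨he, rfl⟩, rfl⟩
        exact he
      · intro h
        exact ⟨(a, b), ⟨h, rfl⟩, rfl⟩
    have hcards : (Finset.univ.filter fun f : Equiv.Perm (Fin n) => ∀ a, (a, f a) ∈ E).card
        = (mset d Finset.univ N).card := by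
      apply Finset.card_bij (fun (σ : Equiv.Perm (Fin n)) (_ : σ ∈ _) => (σ : Fin n → Fin n))
      · intro σ hσ
        rw [Finset.mem_filter] at hσ
        rw [mem_mset]
        exact ⟨fun i _ => (hmemN i (σ i)).mpr (hσ.2 i), fun i hi => absurd (Finset.mem_univ i) hi,
          σ.injective.injOn⟩
      · intro σ _ τ _ h
        exact Equiv.ext (fun x => congrFun h x)
      · intro f hf
        rw [mem_mset] at hf
        have hbij : Function.Bijective f := (Finite.injective_iff_bijective).mp
          (fun x y h => hf.2.2 (Finset.mem_coe.mpr (Finset.mem_univ x)) (Finset.mem_coe.mpr (Finset.mem_univ y)) h)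
        refine ⟨Equiv.ofBijective f hbij, ?_, rfl⟩
        rw [Finset.mem_filter]
        refine ⟨Finset.mem_univ _, fun a => ?_⟩
        exact (hmemN a (f a)).mp (hf.1 a (Finset.mem_univ a))
    rw [hcards]
    calc ((mset d Finset.univ N).card : ℝ)
        ≤ ∏ i ∈ Finset.univ, (((N i).card.factorial : ℕ) : ℝ) ^ ((1:ℝ) / ((N i).card : ℝ)) :=
          bregman d n Finset.univ Finset.univ N (by simp) (by simp) (fun i _ => Finset.subset_univ _)
      _ = ((r.factorial : ℝ) ^ ((1:ℝ)/(r:ℝ))) ^ n := by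
          rw [Finset.prod_congr rfl (fun i _ => by rw [hNcard i]), Finset.prod_const,
            Finset.card_univ, Fintype.card_fin]
      _ = (r.factorial : ℝ) ^ ((n:ℝ) / (r:ℝ)) := by
          rw [← Real.rpow_natCast ((r.factorial : ℝ) ^ ((1:ℝ)/(r:ℝ))) n,
            ← Real.rpow_mul (by positivity)]
          congr 1
          rcases Nat.eq_zero_or_pos r with rfl | hr
          · simp
          · field_simp
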